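/- The entanglement of purification admits the following channel reformulation: for every density matrix ρ on H_A ⊗ H_B with eigendecomposition ρ = Σ_i λ_i |ψ_i⟩⟨ψ_i|, let |ψ_s⟩ = Σ_i √λ_i |ψ_i⟩_{AB} ⊗ |0⟩_{A'} |i⟩_{B'} be the standard purification and μ_{BB'}(ρ) = Tr_{AA'} |ψ_s⟩⟨ψ_s|. Then E_p(ρ) = inf over TCP maps Λ_{B'} acting on the B' system of S((I_B ⊗ Λ_{B'})(μ_{BB'}(ρ))). -/

import Mathlib

noncomputable section
open scoped BigOperators Kronecker Matrix ComplexOrder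
open Matrix

namespace QIT

def IsDensity {n : Type*} [Fintype n] [DecidableEq n] (ρ : Matrix n n ℂ) : Prop :=
  ρ.PosSemidef ∧ ρ.trace = 1

noncomputable def vN {n : Type*} [Fintype n] [DecidableEq n] (ρ : Matrix n n ℂ) : ℝ :=
  if h : ρ.IsHermitian then ∑ i, -(h.eigenvalues i * Real.logb 2 (h.eigenvalues i)) else 0

def proj {n : Type*} (ψ : n → ℂ) : Matrix n n ℂ :=
  Matrix.of fun x y => ψ x * (starRingEnd ℂ) (ψ y)

def ptraceL {a b : Type*} [Fintype a] (ρ : Matrix (a × b) (a × b) ℂ) : Matrix b b ℂ :=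
  Matrix.of fun i j => ∑ k, ρ (k, i) (k, j)

def ptraceR {a b : Type*} [Fintype b] (ρ : Matrix (a × b) (a × b) ℂ) : Matrix a a ℂ :=
  Matrix.of fun i j => ∑ k, ρ (i, k) (j, k)

noncomputable def ent {X Y : Type*} [Fintype X] [Fintype Y] [DecidableEq Y]
    (ψ : X × Y → ℂ) : ℝ :=
  vN (ptraceL (proj ψ))

def IsPurification {A B : Type*} [Fintype A] [Fintype B] {dA' dB' : ℕ}
    (ρ : Matrix (A × B) (A × B) ℂ)
    (ψ : (A × Fin dA') × (B × Fin dB') → ℂ) : Prop :=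
  (∑ x, ‖ψ x‖ ^ 2 = 1) ∧
  ∀ a b a' b', ρ (a, b) (a', b') =
    ∑ a2 : Fin dA', ∑ b2 : Fin dB',
      ψ ((a, a2), (b, b2)) * (starRingEnd ℂ) (ψ ((a', a2), (b', b2)))

noncomputable def Ep {A B : Type*} [Fintype A] [Fintype B] [DecidableEq A] [DecidableEq B]
    (ρ : Matrix (A × B) (A × B) ℂ) : ℝ :=
  sInf { e : ℝ | ∃ (dA' dB' : ℕ) (ψ : (A × Fin dA') × (B × Fin dB') → ℂ),
    IsPurification ρ ψ ∧ e = ent ψ }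

noncomputable def Iq {A B : Type*} [Fintype A] [Fintype B] [DecidableEq A] [DecidableEq B]
    (ρ : Matrix (A × B) (A × B) ℂ) : ℝ :=
  vN (ptraceR ρ) + vN (ptraceL ρ) - vN ρ

open Classical in
noncomputable def msqrt {n : Type*} [Fintype n] [DecidableEq n] (M : Matrix n n ℂ) : Matrix n n ℂ :=
  if h : M.PosSemidef then
    (h.1.eigenvectorUnitary : Matrix n n ℂ) *
      diagonal ((↑) ∘ (fun i => Real.sqrt (h.1.eigenvalues i))) *
      (star (h.1.eigenvectorUnitary : Matrix n n ℂ))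
  else 0

noncomputable def fid {n : Type*} [Fintype n] [DecidableEq n] (ρ σ : Matrix n n ℂ) : ℝ :=
  ((msqrt (msqrt ρ * σ * msqrt ρ)).trace).re

noncomputable def bures {n : Type*} [Fintype n] [DecidableEq n] (ρ σ : Matrix n n ℂ) : ℝ :=
  2 * Real.sqrt (1 - fid ρ σ)

noncomputable def traceNorm {n : Type*} [Fintype n] [DecidableEq n] (X : Matrix n n ℂ) : ℝ :=
  ((msqrt (Xᴴ * X)).trace).re

def IsPOVM {n : Type*} [Fintype n] [DecidableEq n] {k : ℕ} (M : Fin k → Matrix n n ℂ) : Prop :=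
  (∀ i, (M i).PosSemidef) ∧ ∑ i, M i = 1

noncomputable def shannon {k : Type*} [Fintype k] (p : k → ℝ) : ℝ :=
  ∑ i, -(p i * Real.logb 2 (p i))

noncomputable def miJoint {k l : Type*} [Fintype k] [Fintype l] (p : k × l → ℝ) : ℝ :=
  shannon (fun i => ∑ j, p (i, j)) + shannon (fun j => ∑ i, p (i, j)) - shannon p

noncomputable def Ic {A B : Type*} [Fintype A] [Fintype B] [DecidableEq A] [DecidableEq B]
    (ρ : Matrix (A × B) (A × B) ℂ) : ℝ :=
  sSup { e : ℝ | ∃ (k l : ℕ) (MA : Fin k → Matrix A A ℂ) (MB : Fin l → Matrix B B ℂ),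
    IsPOVM MA ∧ IsPOVM MB ∧
    e = miJoint (fun ij : Fin k × Fin l => (((MA ij.1 ⊗ₖ MB ij.2) * ρ).trace).re) }

noncomputable def probOf {A B : Type*} [Fintype A] [Fintype B] [DecidableEq A] [DecidableEq B]
    (M : Matrix A A ℂ) (ρ : Matrix (A × B) (A × B) ℂ) : ℝ :=
  (((M ⊗ₖ (1 : Matrix B B ℂ)) * ρ).trace).re

noncomputable def postB {A B : Type*} [Fintype A] [Fintype B] [DecidableEq A] [DecidableEq B]
    (M : Matrix A A ℂ) (ρ : Matrix (A × B) (A × B) ℂ) : Matrix B B ℂ :=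
  ((probOf M ρ : ℂ))⁻¹ • ptraceL ((M ⊗ₖ (1 : Matrix B B ℂ)) * ρ)

noncomputable def CA {A B : Type*} [Fintype A] [Fintype B] [DecidableEq A] [DecidableEq B]
    (ρ : Matrix (A × B) (A × B) ℂ) : ℝ :=
  sSup { c : ℝ | ∃ (k : ℕ) (M : Fin k → Matrix A A ℂ), IsPOVM M ∧
    c = vN (∑ i, (probOf (M i) ρ : ℂ) • postB (M i) ρ)
        - ∑ i, probOf (M i) ρ * vN (postB (M i) ρ) }

noncomputable def pauli : Fin 4 → Matrix (Fin 2) (Fin 2) ℂ :=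
  ![1, !![0, 1; 1, 0], !![0, -Complex.I; Complex.I, 0], !![1, 0; 0, -1]]

noncomputable def bell0 : Fin 2 × Fin 2 → ℂ :=
  fun x => if x.1 = x.2 then ((Real.sqrt 2)⁻¹ : ℝ) else 0

noncomputable def bell (i : Fin 4) : Fin 2 × Fin 2 → ℂ :=
  fun x => ∑ j, pauli i x.2 j * bell0 (x.1, j)

noncomputable def binEnt (x : ℝ) : ℝ :=
  -(x * Real.logb 2 x) - (1 - x) * Real.logb 2 (1 - x)

noncomputable def pauliChannel (p : Fin 4 → ℝ) (X : Matrix (Fin 2) (Fin 2) ℂ) :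
    Matrix (Fin 2) (Fin 2) ℂ :=
  ∑ i, (p i : ℂ) • (pauli i * X * pauli i)

noncomputable def holevoCap (Λ : Matrix (Fin 2) (Fin 2) ℂ → Matrix (Fin 2) (Fin 2) ℂ) : ℝ :=
  sSup { c : ℝ | ∃ (k : ℕ) (q : Fin k → ℝ) (ρs : Fin k → Matrix (Fin 2) (Fin 2) ℂ),
    (∀ i, 0 ≤ q i) ∧ (∑ i, q i = 1) ∧ (∀ i, IsDensity (ρs i)) ∧
    c = vN (∑ i, (q i : ℂ) • Λ (ρs i)) - ∑ i, q i * vN (Λ (ρs i)) }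

def tensPow {A B : Type*} [Fintype A] [Fintype B]
    (ρ : Matrix (A × B) (A × B) ℂ) (n : ℕ) :
    Matrix ((Fin n → A) × (Fin n → B)) ((Fin n → A) × (Fin n → B)) ℂ :=
  Matrix.of fun x y => ∏ t, ρ (x.1 t, x.2 t) (y.1 t, y.2 t)


section Helpers
open Matrix

lemma sum4 {α β γ δ : Type*} [Fintype α] [Fintype β] [Fintype γ] [Fintype δ]
    (f : α → β → γ → δ → ℂ) :
    ∑ a, ∑ b, ∑ c, ∑ d, f a b c d = ∑ c, ∑ d, ∑ a, ∑ b, f a b c d := by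
  trans ∑ p : α × β, ∑ q : γ × δ, f p.1 p.2 q.1 q.2
  · simp [Fintype.sum_prod_type]
  · rw [Finset.sum_comm]; simp [Fintype.sum_prod_type]

lemma complete {dA dB : ℕ} (v : Fin (dA*dB) → Fin dA × Fin dB → ℂ)
    (hon : ∀ i j, ∑ x, (starRingEnd ℂ) (v i x) * v j x = if i = j then 1 else 0) :
    ∀ x y, ∑ i, (starRingEnd ℂ) (v i x) * v i y = if x = y then 1 else 0 := by
  set e := (finProdFinEquiv : Fin dA × Fin dB ≃ Fin (dA*dB)) with he
  set Q : Matrix (Fin (dA*dB)) (Fin (dA*dB)) ℂ := Matrix.of fun i k => v i (e.symm k) with hQdef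
  have hQ : Q * Qᴴ = 1 := by
    ext i j
    have h1 : ∑ k, Q i k * star (Q j k) = ∑ x, v i x * star (v j x) :=
      Fintype.sum_equiv e.symm _ _ (fun k => by simp [hQdef])
    have h2 : ∑ x, v i x * star (v j x)
        = star (∑ x, (starRingEnd ℂ) (v i x) * v j x) := by
      simp [map_sum, mul_comm]
    rw [Matrix.mul_apply]
    simp only [Matrix.conjTranspose_apply]
    rw [h1, h2, hon i j]
    by_cases h : i = j <;> simp [h, Matrix.one_apply]
  have hQ2 : Qᴴ * Q = 1 := mul_eq_one_comm.mp hQ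
  intro x y
  have := congrFun (congrFun hQ2 (e x)) (e y)
  simp only [Matrix.mul_apply, Matrix.conjTranspose_apply, Matrix.one_apply, hQdef,
    Matrix.of_apply, Equiv.symm_apply_apply, EmbeddingLike.apply_eq_iff_eq] at this
  exact this

lemma kron_one_apply {dB d2 n : ℕ} (W : Matrix (Fin d2) (Fin n) ℂ)
    (p : Fin dB × Fin d2) (q : Fin dB × Fin n) :
    ((1 : Matrix (Fin dB) (Fin dB) ℂ) ⊗ₖ W) p q = (if p.1 = q.1 then 1 else 0) * W p.2 q.2 := by
  simp [Matrix.kroneckerMap_apply, Matrix.one_apply]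

lemma chan_apply {dB d2 n : ℕ} (W : Matrix (Fin d2) (Fin n) ℂ)
    (μ : Matrix (Fin dB × Fin n) (Fin dB × Fin n) ℂ) (b b' : Fin dB) (c c' : Fin d2) :
    (((1 : Matrix (Fin dB) (Fin dB) ℂ) ⊗ₖ W) * μ * ((1 : Matrix (Fin dB) (Fin dB) ℂ) ⊗ₖ W)ᴴ)
      (b,c) (b',c')
    = ∑ j, ∑ j', W c j * (starRingEnd ℂ) (W c' j') * μ (b,j) (b',j') := by
  simp only [Matrix.mul_apply, Matrix.conjTranspose_apply, kron_one_apply,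
    Fintype.sum_prod_type, star_mul']
  simp only [Finset.sum_mul, Finset.mul_sum, ite_mul, one_mul, zero_mul, mul_ite, mul_one,
    mul_zero, apply_ite (star : ℂ → ℂ), star_one, star_zero]
  simp only [Finset.sum_ite_irrel, Finset.sum_ite_eq, Finset.sum_const_zero, Finset.mem_univ,
    if_true]
  rw [Finset.sum_comm]
  exact Finset.sum_congr rfl fun j _ => Finset.sum_congr rfl fun j' _ => by
    rw [Complex.star_def]; ring

lemma mu_apply {dA dB : ℕ} (lam : Fin (dA*dB) → ℝ) (v : Fin (dA*dB) → Fin dA × Fin dB → ℂ)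
    (b b' : Fin dB) (j j' : Fin (dA*dB)) :
    ptraceL (proj (fun x : (Fin dA × Fin 1) × (Fin dB × Fin (dA*dB)) =>
        ((Real.sqrt (lam x.2.2) : ℝ) : ℂ) * v x.2.2 (x.1.1, x.2.1))) (b,j) (b',j')
    = (Real.sqrt (lam j) : ℂ) * (Real.sqrt (lam j') : ℂ) *
        ∑ a, v j (a,b) * (starRingEnd ℂ) (v j' (a,b')) := by
  simp only [ptraceL, proj, Matrix.of_apply, Fintype.sum_prod_type, Finset.univ_unique,
    Finset.sum_singleton, _root_.map_mul, Complex.conj_ofReal, Finset.mul_sum]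
  exact Finset.sum_congr rfl fun a _ => by ring

end Helpers


lemma sum_rot4 {α β γ δ : Type*} [Fintype α] [Fintype β] [Fintype γ] [Fintype δ]
    (f : α → β → γ → δ → ℂ) :
    ∑ a, ∑ b, ∑ c, ∑ d, f a b c d = ∑ b, ∑ c, ∑ d, ∑ a, f a b c d := by
  trans ∑ a, ∑ q : β × γ × δ, f a q.1 q.2.1 q.2.2
  · simp [Fintype.sum_prod_type]
  · rw [Finset.sum_comm]; simp [Fintype.sum_prod_type]

lemma sum3 {α β γ : Type*} [Fintype α] [Fintype β] [Fintype γ]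
    (f : α → β → γ → ℂ) :
    ∑ a, ∑ b, ∑ c, f a b c = ∑ b, ∑ c, ∑ a, f a b c := by
  trans ∑ a, ∑ q : β × γ, f a q.1 q.2
  · simp [Fintype.sum_prod_type]
  · rw [Finset.sum_comm]; simp [Fintype.sum_prod_type]

lemma dir1 {dA dB : ℕ} (ρ : Matrix (Fin dA × Fin dB) (Fin dA × Fin dB) ℂ)
    (htr : ρ.trace = 1)
    (lam : Fin (dA * dB) → ℝ) (v : Fin (dA * dB) → Fin dA × Fin dB → ℂ)
    (hlam : ∀ i, 0 ≤ lam i)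
    (hon : ∀ i j, ∑ x, (starRingEnd ℂ) (v i x) * v j x = if i = j then 1 else 0)
    (hdecomp : ρ = ∑ i, (lam i : ℂ) • proj (v i))
    {d2 m : ℕ} (V : Fin m → Matrix (Fin d2) (Fin (dA*dB)) ℂ)
    (hV : ∑ i, (V i)ᴴ * V i = 1) :
    ∃ ψ : (Fin dA × Fin m) × (Fin dB × Fin d2) → ℂ,
      IsPurification ρ ψ ∧
      vN (∑ i, ((1 : Matrix (Fin dB) (Fin dB) ℂ) ⊗ₖ V i) *
            ptraceL (proj (fun x : (Fin dA × Fin 1) × (Fin dB × Fin (dA * dB)) =>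
              ((Real.sqrt (lam x.2.2) : ℝ) : ℂ) * v x.2.2 (x.1.1, x.2.1))) *
            ((1 : Matrix (Fin dB) (Fin dB) ℂ) ⊗ₖ V i)ᴴ) = ent ψ := by
  set ψ' : (Fin dA × Fin m) × (Fin dB × Fin d2) → ℂ :=
    fun x => ∑ j, V x.1.2 x.2.2 j * ((Real.sqrt (lam j) : ℝ) : ℂ) * v j (x.1.1, x.2.1)
    with hψ'
  have hrho : ∀ (a : Fin dA) (b : Fin dB) a' b', ρ (a,b) (a',b')
      = ∑ j, (lam j : ℂ) * (v j (a,b) * (starRingEnd ℂ) (v j (a',b'))) := by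
    intro a b a' b'
    rw [hdecomp]
    simp [Matrix.sum_apply, proj, Matrix.smul_apply, smul_eq_mul]
  have hVo : ∀ j j', (∑ e, ∑ c, (starRingEnd ℂ) (V e c j) * V e c j')
      = if j = j' then 1 else 0 := by
    intro j j'
    have h := Matrix.ext_iff.mpr hV j j'
    simpa [Matrix.sum_apply, Matrix.mul_apply, Matrix.conjTranspose_apply,
      Matrix.one_apply] using h
  have hVo' : ∀ j j', (∑ e, ∑ c, V e c j * (starRingEnd ℂ) (V e c j'))
      = if j = j' then 1 else 0 := by
    intro j j'
    have h := congrArg (starRingEnd ℂ) (hVo j j')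
    simpa [map_sum, _root_.map_mul, Complex.conj_conj,
      apply_ite (starRingEnd ℂ)] using h
  have hcore : ∀ (a a' : Fin dA) (e : Fin m) (b b' : Fin dB) (c c' : Fin d2),
      ψ' ((a,e),(b,c)) * (starRingEnd ℂ) (ψ' ((a',e),(b',c')))
      = ∑ j, ∑ j', (V e c j * (starRingEnd ℂ) (V e c' j')) *
          (((Real.sqrt (lam j) : ℂ) * (Real.sqrt (lam j') : ℂ)) *
            (v j (a,b) * (starRingEnd ℂ) (v j' (a',b')))) := by
    intro a a' e b b' c c'
    rw [hψ']
    simp only [map_sum, _root_.map_mul, Complex.conj_ofReal, Finset.sum_mul_sum]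
    exact Finset.sum_congr rfl fun j _ => Finset.sum_congr rfl fun j' _ => by ring
  have hmain : ∀ (a a' : Fin dA) (b b' : Fin dB),
      (∑ e, ∑ c, ψ' ((a,e),(b,c)) * (starRingEnd ℂ) (ψ' ((a',e),(b',c))))
      = ρ (a,b) (a',b') := by
    intro a a' b b'
    calc ∑ e, ∑ c, ψ' ((a,e),(b,c)) * (starRingEnd ℂ) (ψ' ((a',e),(b',c)))
        = ∑ e, ∑ c, ∑ j, ∑ j', (V e c j * (starRingEnd ℂ) (V e c j')) *
            (((Real.sqrt (lam j) : ℂ) * (Real.sqrt (lam j') : ℂ)) *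
              (v j (a,b) * (starRingEnd ℂ) (v j' (a',b')))) := by
          exact Finset.sum_congr rfl fun e _ => Finset.sum_congr rfl fun c _ =>
            hcore a a' e b b' c c
      _ = ∑ j, ∑ j', (∑ e, ∑ c, V e c j * (starRingEnd ℂ) (V e c j')) *
            (((Real.sqrt (lam j) : ℂ) * (Real.sqrt (lam j') : ℂ)) *
              (v j (a,b) * (starRingEnd ℂ) (v j' (a',b')))) := by
          rw [sum4]
          exact Finset.sum_congr rfl fun j _ => Finset.sum_congr rfl fun j' _ => by
            simp [Finset.sum_mul]
      _ = ∑ j, (lam j : ℂ) * (v j (a,b) * (starRingEnd ℂ) (v j (a',b'))) := by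
          rw [Finset.sum_comm]
          apply Finset.sum_congr rfl; intro j' _
          rw [Finset.sum_eq_single_of_mem j' (Finset.mem_univ j')
            (fun j _ hj => by rw [hVo' j j', if_neg hj, zero_mul])]
          rw [hVo' j' j', if_pos rfl, one_mul, ← Complex.ofReal_mul,
            Real.mul_self_sqrt (hlam j')]
      _ = ρ (a,b) (a',b') := (hrho a b a' b').symm
  refine ⟨ψ', ⟨?_, ?_⟩, ?_⟩
  · -- normalization
    have hc : ((∑ x, ‖ψ' x‖^2 : ℝ) : ℂ) = 1 := by
      push_cast
      calc ∑ x, (‖ψ' x‖:ℂ)^2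
          = ∑ x, ψ' x * (starRingEnd ℂ) (ψ' x) := by
            exact Finset.sum_congr rfl fun x _ => (Complex.mul_conj' (ψ' x)).symm
        _ = ∑ a, ∑ e, ∑ b, ∑ c, ψ' ((a,e),(b,c)) * (starRingEnd ℂ) (ψ' ((a,e),(b,c))) := by
            simp only [Fintype.sum_prod_type]
        _ = ∑ a, ∑ b, ∑ e, ∑ c, ψ' ((a,e),(b,c)) * (starRingEnd ℂ) (ψ' ((a,e),(b,c))) :=
            Finset.sum_congr rfl fun a _ => Finset.sum_comm
        _ = ∑ a, ∑ b, ρ (a,b) (a,b) :=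
            Finset.sum_congr rfl fun a _ => Finset.sum_congr rfl fun b _ => hmain a a b b
        _ = ρ.trace := by
            rw [Matrix.trace]
            simp [Fintype.sum_prod_type, Matrix.diag]
        _ = 1 := htr
    exact_mod_cast hc
  · -- purification entries
    intro a b a' b'
    exact (hmain a a' b b').symm
  · -- entropy equality
    set μM : Matrix (Fin dB × Fin (dA*dB)) (Fin dB × Fin (dA*dB)) ℂ :=
      ptraceL (proj (fun x : (Fin dA × Fin 1) × (Fin dB × Fin (dA * dB)) =>
        ((Real.sqrt (lam x.2.2) : ℝ) : ℂ) * v x.2.2 (x.1.1, x.2.1))) with hμM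
    have hmat : (∑ i, ((1 : Matrix (Fin dB) (Fin dB) ℂ) ⊗ₖ V i) * μM *
            ((1 : Matrix (Fin dB) (Fin dB) ℂ) ⊗ₖ V i)ᴴ) = ptraceL (proj ψ') := by
      ext ⟨b,c⟩ ⟨b',c'⟩
      rw [Matrix.sum_apply]
      calc ∑ e, (((1 : Matrix (Fin dB) (Fin dB) ℂ) ⊗ₖ V e) * μM *
              ((1 : Matrix (Fin dB) (Fin dB) ℂ) ⊗ₖ V e)ᴴ) (b,c) (b',c')
          = ∑ e, ∑ j, ∑ j', ∑ a, (V e c j * (starRingEnd ℂ) (V e c' j')) *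
              (((Real.sqrt (lam j) : ℂ) * (Real.sqrt (lam j') : ℂ)) *
                (v j (a,b) * (starRingEnd ℂ) (v j' (a,b')))) := by
            apply Finset.sum_congr rfl; intro e _
            rw [chan_apply]
            apply Finset.sum_congr rfl; intro j _
            apply Finset.sum_congr rfl; intro j' _
            rw [hμM, mu_apply]
            simp only [Finset.mul_sum]
        _ = ∑ j, ∑ j', ∑ a, ∑ e, (V e c j * (starRingEnd ℂ) (V e c' j')) *
              (((Real.sqrt (lam j) : ℂ) * (Real.sqrt (lam j') : ℂ)) *
                (v j (a,b) * (starRingEnd ℂ) (v j' (a,b')))) := by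
            exact sum_rot4 _
        _ = ∑ a, ∑ e, ψ' ((a,e),(b,c)) * (starRingEnd ℂ) (ψ' ((a,e),(b',c'))) := by
            rw [sum4]
            exact Finset.sum_congr rfl fun a _ => Finset.sum_congr rfl fun e _ =>
              (hcore a a e b b' c c').symm
        _ = ptraceL (proj ψ') (b,c) (b',c') := by
            simp only [ptraceL, proj, Matrix.of_apply, Fintype.sum_prod_type]
    rw [ent, hmat]


lemma dir2 {dA dB : ℕ} (ρ : Matrix (Fin dA × Fin dB) (Fin dA × Fin dB) ℂ)
    (lam : Fin (dA * dB) → ℝ) (v : Fin (dA * dB) → Fin dA × Fin dB → ℂ)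
    (hlam : ∀ i, 0 ≤ lam i)
    (hon : ∀ i j, ∑ x, (starRingEnd ℂ) (v i x) * v j x = if i = j then 1 else 0)
    (hdecomp : ρ = ∑ i, (lam i : ℂ) • proj (v i))
    {dA' dB' : ℕ} (ψ : (Fin dA × Fin dA') × (Fin dB × Fin dB') → ℂ)
    (hnorm : ∑ x, ‖ψ x‖ ^ 2 = 1)
    (hpur : ∀ a b a' b', ρ (a, b) (a', b') =
      ∑ a2 : Fin dA', ∑ b2 : Fin dB',
        ψ ((a, a2), (b, b2)) * (starRingEnd ℂ) (ψ ((a', a2), (b', b2)))) :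
    ∃ (d2 m : ℕ) (V : Fin m → Matrix (Fin d2) (Fin (dA*dB)) ℂ),
      (∑ i, (V i)ᴴ * V i = 1) ∧
      ent ψ = vN (∑ i, ((1 : Matrix (Fin dB) (Fin dB) ℂ) ⊗ₖ V i) *
            ptraceL (proj (fun x : (Fin dA × Fin 1) × (Fin dB × Fin (dA * dB)) =>
              ((Real.sqrt (lam x.2.2) : ℝ) : ℂ) * v x.2.2 (x.1.1, x.2.1))) *
            ((1 : Matrix (Fin dB) (Fin dB) ℂ) ⊗ₖ V i)ᴴ) := by
  have honC := complete v hon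
  have hB' : 0 < dB' := by
    rcases Nat.eq_zero_or_pos dB' with h | h
    · subst h
      rw [Finset.univ_eq_empty, Finset.sum_empty] at hnorm
      norm_num at hnorm
    · exact h
  set c0 : Fin dB' := ⟨0, hB'⟩ with hc0
  have hrho : ∀ x y : Fin dA × Fin dB, ρ x y
      = ∑ i, (lam i : ℂ) * (v i x * (starRingEnd ℂ) (v i y)) := by
    intro x y
    rw [hdecomp]
    simp [Matrix.sum_apply, proj, Matrix.smul_apply, smul_eq_mul]
  have hρψ : ∀ x y : Fin dA × Fin dB, ρ x y = ∑ a2, ∑ c,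
      ψ ((x.1, a2), (x.2, c)) * (starRingEnd ℂ) (ψ ((y.1, a2), (y.2, c))) := by
    intro x y
    simpa using hpur x.1 x.2 y.1 y.2
  set w : Fin (dA*dB) → Fin dA' → Fin dB' → ℂ :=
    fun j a2 c => ∑ x : Fin dA × Fin dB, (starRingEnd ℂ) (v j x) * ψ ((x.1, a2), (x.2, c))
    with hw
  have hexp : ∀ (a : Fin dA) (a2 : Fin dA') (b : Fin dB) (c : Fin dB'),
      ψ ((a,a2),(b,c)) = ∑ j, v j (a,b) * w j a2 c := by
    intro a a2 b c
    symm
    calc ∑ j, v j (a,b) * w j a2 c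
        = ∑ j, ∑ x : Fin dA × Fin dB,
            (v j (a,b) * (starRingEnd ℂ) (v j x)) * ψ ((x.1,a2),(x.2,c)) := by
          simp only [hw, Finset.mul_sum, mul_assoc]
      _ = ∑ x : Fin dA × Fin dB, ∑ j,
            (v j (a,b) * (starRingEnd ℂ) (v j x)) * ψ ((x.1,a2),(x.2,c)) := Finset.sum_comm
      _ = ∑ x : Fin dA × Fin dB,
            (starRingEnd ℂ) (∑ j, (starRingEnd ℂ) (v j (a,b)) * v j x) * ψ ((x.1,a2),(x.2,c)) := by
          apply Finset.sum_congr rfl; intro x _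
          rw [← Finset.sum_mul]
          congr 1
          simp [map_sum, _root_.map_mul, mul_comm]
      _ = ∑ x : Fin dA × Fin dB, (if (a,b) = x then 1 else 0) * ψ ((x.1,a2),(x.2,c)) := by
          apply Finset.sum_congr rfl; intro x _
          rw [honC (a,b) x]
          by_cases h : (a,b) = x <;> simp [h]
      _ = ψ ((a,a2),(b,c)) := by
          simp [ite_mul, one_mul, zero_mul, Finset.sum_ite_eq, Finset.mem_univ]
  have hG : ∀ j j', (∑ a2, ∑ c, w j a2 c * (starRingEnd ℂ) (w j' a2 c))
      = if j = j' then (lam j : ℂ) else 0 := by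
    intro j j'
    calc ∑ a2, ∑ c, w j a2 c * (starRingEnd ℂ) (w j' a2 c)
        = ∑ a2, ∑ c, ∑ x : Fin dA × Fin dB, ∑ y : Fin dA × Fin dB,
            ((starRingEnd ℂ) (v j x) * ψ ((x.1,a2),(x.2,c))) *
              (v j' y * (starRingEnd ℂ) (ψ ((y.1,a2),(y.2,c)))) := by
          apply Finset.sum_congr rfl; intro a2 _
          apply Finset.sum_congr rfl; intro c _
          simp only [hw, map_sum, _root_.map_mul, Complex.conj_conj, Finset.sum_mul_sum]
      _ = ∑ x : Fin dA × Fin dB, ∑ y : Fin dA × Fin dB, ∑ a2, ∑ c,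
            ((starRingEnd ℂ) (v j x) * ψ ((x.1,a2),(x.2,c))) *
              (v j' y * (starRingEnd ℂ) (ψ ((y.1,a2),(y.2,c)))) := sum4 _
      _ = ∑ x : Fin dA × Fin dB, ∑ y : Fin dA × Fin dB,
            ((starRingEnd ℂ) (v j x) * v j' y) * ρ x y := by
          apply Finset.sum_congr rfl; intro x _
          apply Finset.sum_congr rfl; intro y _
          rw [hρψ x y]
          simp only [Finset.mul_sum]
          exact Finset.sum_congr rfl fun a2 _ => Finset.sum_congr rfl fun c _ => by ring
      _ = ∑ x : Fin dA × Fin dB, ∑ y : Fin dA × Fin dB, ∑ i, (lam i : ℂ) *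
            (((starRingEnd ℂ) (v j x) * v i x) * (v j' y * (starRingEnd ℂ) (v i y))) := by
          apply Finset.sum_congr rfl; intro x _
          apply Finset.sum_congr rfl; intro y _
          rw [hrho x y]
          simp only [Finset.mul_sum]
          exact Finset.sum_congr rfl fun i _ => by ring
      _ = ∑ i, ∑ x : Fin dA × Fin dB, ∑ y : Fin dA × Fin dB, (lam i : ℂ) *
            (((starRingEnd ℂ) (v j x) * v i x) * (v j' y * (starRingEnd ℂ) (v i y))) := by
          rw [sum3, sum3]
      _ = ∑ i, (lam i : ℂ) * ((∑ x, (starRingEnd ℂ) (v j x) * v i x) *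
            (∑ y, v j' y * (starRingEnd ℂ) (v i y))) := by
          apply Finset.sum_congr rfl; intro i _
          rw [Finset.sum_mul_sum]
          simp only [Finset.mul_sum]
      _ = if j = j' then (lam j : ℂ) else 0 := by
          have h2 : ∀ i, (∑ y, v j' y * (starRingEnd ℂ) (v i y)) = if j' = i then 1 else 0 := by
            intro i
            have h := congrArg (starRingEnd ℂ) (hon j' i)
            simpa [map_sum, _root_.map_mul, Complex.conj_conj, apply_ite (starRingEnd ℂ),
              mul_comm] using h
          rw [Finset.sum_eq_single j]
          · rw [hon j j, if_pos rfl, h2 j]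
            by_cases hjj : j = j' <;> simp [hjj, eq_comm]
          · intro i _ hij
            rw [hon j i, if_neg (fun h => hij h.symm)]
            simp
          · intro h; exact absurd (Finset.mem_univ j) h
  have hG' : ∀ j j', (∑ a2, ∑ c, (starRingEnd ℂ) (w j a2 c) * w j' a2 c)
      = if j = j' then (lam j : ℂ) else 0 := by
    intro j j'
    have h := congrArg (starRingEnd ℂ) (hG j j')
    rw [eq_comm]
    simpa [map_sum, _root_.map_mul, Complex.conj_conj, apply_ite (starRingEnd ℂ),
      mul_comm, eq_comm] using h.symm
  have hw0 : ∀ j, ¬ (0 < lam j) → ∀ a2 c, w j a2 c = 0 := by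
    intro j hj a2 c
    have hl0 : lam j = 0 := le_antisymm (not_lt.mp hj) (hlam j)
    have h := hG j j
    rw [if_pos rfl, hl0, Complex.ofReal_zero] at h
    have h2 : ∑ a2, ∑ c, (Complex.normSq (w j a2 c) : ℂ) = 0 := by
      simpa [Complex.mul_conj] using h
    have h3 : ∑ a2, ∑ c, Complex.normSq (w j a2 c) = 0 := by exact_mod_cast h2
    have h4 := (Finset.sum_eq_zero_iff_of_nonneg (fun a2 _ =>
      Finset.sum_nonneg fun c _ => Complex.normSq_nonneg _)).mp h3 a2 (Finset.mem_univ _)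
    have h5 := (Finset.sum_eq_zero_iff_of_nonneg (fun c _ =>
      Complex.normSq_nonneg _)).mp h4 c (Finset.mem_univ _)
    exact Complex.normSq_eq_zero.mp h5
  set f1 : Fin (dA*dB) → Fin dA' → Fin dB' → ℂ := fun j e c =>
    if 0 < lam j then ((Real.sqrt (lam j) : ℝ) : ℂ)⁻¹ * w j e c else 0 with hf1
  set f2 : Fin (dA*dB) → Fin (dA*dB) → Fin dB' → ℂ := fun j j0 c =>
    if c = c0 ∧ j = j0 ∧ ¬ 0 < lam j then 1 else 0 with hf2
  set V : Fin (dA' + dA*dB) → Matrix (Fin dB') (Fin (dA*dB)) ℂ :=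
    fun i => Fin.addCases
      (fun e => Matrix.of fun c j => f1 j e c)
      (fun j0 => Matrix.of fun c j => f2 j j0 c) i with hV
  have hsqrt_ne : ∀ j, 0 < lam j → ((Real.sqrt (lam j) : ℝ) : ℂ) ≠ 0 := by
    intro j hj
    exact_mod_cast Real.sqrt_ne_zero'.mpr hj
  have key1 : ∀ j j', (∑ e, ∑ c, (starRingEnd ℂ) (f1 j e c) * f1 j' e c)
      = if j = j' ∧ 0 < lam j then 1 else 0 := by
    intro j j'
    by_cases hj : 0 < lam j
    · by_cases hj' : 0 < lam j'
      · have hstep : (∑ e, ∑ c, (starRingEnd ℂ) (f1 j e c) * f1 j' e c)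
            = ((Real.sqrt (lam j) : ℂ))⁻¹ * ((Real.sqrt (lam j') : ℂ))⁻¹ *
              ∑ e, ∑ c, (starRingEnd ℂ) (w j e c) * w j' e c := by
          simp only [hf1, if_pos hj, if_pos hj', _root_.map_mul, map_inv₀,
            Complex.conj_ofReal, Finset.mul_sum]
          exact Finset.sum_congr rfl fun e _ => Finset.sum_congr rfl fun c _ => by ring
        rw [hstep, hG' j j']
        by_cases hjj : j = j'
        · subst hjj
          rw [if_pos rfl, if_pos ⟨rfl, hj⟩]
          rw [show ((lam j : ℝ) : ℂ) = (Real.sqrt (lam j) : ℂ) * (Real.sqrt (lam j) : ℂ) by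
            rw [← Complex.ofReal_mul, Real.mul_self_sqrt (hlam j)]]
          field_simp
        · rw [if_neg hjj, if_neg (fun h => hjj h.1)]
          ring
      · have hz : ∀ e c, f1 j' e c = 0 := by
          intro e c; simp [hf1, hj']
        have : ¬ (j = j' ∧ 0 < lam j) := fun h => hj' (h.1 ▸ hj)
        simp [hz, if_neg this]
    · have hz : ∀ e c, f1 j e c = 0 := by
        intro e c; simp [hf1, hj]
      have : ¬ (j = j' ∧ 0 < lam j) := fun h => hj h.2
      simp [hz, if_neg this]
  have key2 : ∀ j j', (∑ j0, ∑ c, (starRingEnd ℂ) (f2 j j0 c) * f2 j' j0 c)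
      = if j = j' ∧ ¬ 0 < lam j then 1 else 0 := by
    intro j j'
    have hterm : ∀ j0 c, (starRingEnd ℂ) (f2 j j0 c) * f2 j' j0 c
        = if (c = c0 ∧ j = j0 ∧ ¬ 0 < lam j) ∧ (c = c0 ∧ j' = j0 ∧ ¬ 0 < lam j')
            then 1 else 0 := by
      intro j0 c
      simp only [hf2]
      by_cases hA : c = c0 ∧ j = j0 ∧ ¬ 0 < lam j
      · by_cases hB : c = c0 ∧ j' = j0 ∧ ¬ 0 < lam j'
        · rw [if_pos hA, if_pos hB, if_pos ⟨hA, hB⟩]; simp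
        · rw [if_pos hA, if_neg hB,
            if_neg (show ¬((c = c0 ∧ j = j0 ∧ ¬ 0 < lam j) ∧
              (c = c0 ∧ j' = j0 ∧ ¬ 0 < lam j')) from fun h => hB h.2)]
          simp
      · rw [if_neg hA,
          if_neg (show ¬((c = c0 ∧ j = j0 ∧ ¬ 0 < lam j) ∧
            (c = c0 ∧ j' = j0 ∧ ¬ 0 < lam j')) from fun h => hA h.1)]
        simp
    simp only [hterm]
    by_cases hjj : j = j'
    · subst hjj
      by_cases hj : 0 < lam j
      · rw [if_neg (fun h => h.2 hj)]
        apply Finset.sum_eq_zero; intro j0 _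
        apply Finset.sum_eq_zero; intro c _
        rw [if_neg (fun h => h.1.2.2 hj)]
      · rw [if_pos ⟨rfl, hj⟩]
        rw [Finset.sum_eq_single j]
        · rw [Finset.sum_eq_single c0]
          · rw [if_pos ⟨⟨rfl, rfl, hj⟩, ⟨rfl, rfl, hj⟩⟩]
          · intro c _ hc
            rw [if_neg (fun h => hc h.1.1)]
          · intro h; exact absurd (Finset.mem_univ c0) h
        · intro j0 _ hj0
          apply Finset.sum_eq_zero; intro c _
          rw [if_neg (fun h => hj0 (h.1.2.1.symm))]
        · intro h; exact absurd (Finset.mem_univ j) h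
    · rw [if_neg (fun h => hjj h.1)]
      apply Finset.sum_eq_zero; intro j0 _
      apply Finset.sum_eq_zero; intro c _
      rw [if_neg (fun h => hjj (h.1.2.1.trans h.2.2.1.symm))]
  have key3 : ∀ j j' e c c', f1 j e c * (starRingEnd ℂ) (f1 j' e c') *
      (((Real.sqrt (lam j) : ℝ) : ℂ) * ((Real.sqrt (lam j') : ℝ) : ℂ))
      = w j e c * (starRingEnd ℂ) (w j' e c') := by
    intro j j' e c c'
    by_cases hj : 0 < lam j
    · by_cases hj' : 0 < lam j'
      · simp only [hf1, if_pos hj, if_pos hj', _root_.map_mul, map_inv₀,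
          Complex.conj_ofReal]
        field_simp
      · simp [hf1, hj', hw0 j' hj']
    · simp [hf1, hj, hw0 j hj]
  refine ⟨dB', dA' + dA*dB, V, ?_, ?_⟩
  · ext j j'
    rw [Matrix.sum_apply, Fin.sum_univ_add]
    simp only [hV, Fin.addCases_left, Fin.addCases_right, Matrix.mul_apply,
      Matrix.conjTranspose_apply, Matrix.of_apply, Complex.star_def]
    rw [key1 j j', key2 j j', Matrix.one_apply]
    by_cases hjj : j = j'
    · subst hjj
      by_cases hj : 0 < lam j
      · simp [hj, hj.not_ge]
      · simp [hj, not_lt.1 hj]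
    · simp [hjj]
  · set μM : Matrix (Fin dB × Fin (dA*dB)) (Fin dB × Fin (dA*dB)) ℂ :=
      ptraceL (proj (fun x : (Fin dA × Fin 1) × (Fin dB × Fin (dA * dB)) =>
        ((Real.sqrt (lam x.2.2) : ℝ) : ℂ) * v x.2.2 (x.1.1, x.2.1))) with hμM
    have hmat : ptraceL (proj ψ) = ∑ i, ((1 : Matrix (Fin dB) (Fin dB) ℂ) ⊗ₖ V i) * μM *
        ((1 : Matrix (Fin dB) (Fin dB) ℂ) ⊗ₖ V i)ᴴ := by
      ext ⟨b,c⟩ ⟨b',c'⟩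
      rw [Matrix.sum_apply, Fin.sum_univ_add]
      have hb2 : ∀ j0 : Fin (dA*dB),
          (((1 : Matrix (Fin dB) (Fin dB) ℂ) ⊗ₖ V (Fin.natAdd dA' j0)) * μM *
            ((1 : Matrix (Fin dB) (Fin dB) ℂ) ⊗ₖ V (Fin.natAdd dA' j0))ᴴ) (b,c) (b',c')
          = 0 := by
        intro j0
        have hVj0 : V (Fin.natAdd dA' j0) = Matrix.of fun c j => f2 j j0 c := by
          simp [hV]
        rw [hVj0, chan_apply]
        apply Finset.sum_eq_zero; intro j _
        apply Finset.sum_eq_zero; intro j' _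
        by_cases hj : 0 < lam j
        · have h0 : (Matrix.of fun c j => f2 j j0 c) c j = 0 := by
            simp [hf2, hj]
          rw [h0, zero_mul, zero_mul]
        · have hl0 : lam j = 0 := le_antisymm (not_lt.mp hj) (hlam j)
          rw [hμM, mu_apply, hl0, Real.sqrt_zero, Complex.ofReal_zero]
          ring
      have hb1 : ∀ e : Fin dA',
          (((1 : Matrix (Fin dB) (Fin dB) ℂ) ⊗ₖ V (Fin.castAdd (dA*dB) e)) * μM *
            ((1 : Matrix (Fin dB) (Fin dB) ℂ) ⊗ₖ V (Fin.castAdd (dA*dB) e))ᴴ) (b,c) (b',c')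
          = ∑ j, ∑ j', ∑ a, (w j e c * (starRingEnd ℂ) (w j' e c')) *
              (v j (a,b) * (starRingEnd ℂ) (v j' (a,b'))) := by
        intro e
        have hVe : V (Fin.castAdd (dA*dB) e) = Matrix.of fun c j => f1 j e c := by
          simp [hV]
        rw [hVe, chan_apply]
        apply Finset.sum_congr rfl; intro j _
        apply Finset.sum_congr rfl; intro j' _
        rw [hμM, mu_apply, Matrix.of_apply, Matrix.of_apply]
        rw [show f1 j e c * (starRingEnd ℂ) (f1 j' e c') *
            (((Real.sqrt (lam j) : ℝ) : ℂ) * ((Real.sqrt (lam j') : ℝ) : ℂ) *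
              ∑ a, v j (a,b) * (starRingEnd ℂ) (v j' (a,b')))
            = (f1 j e c * (starRingEnd ℂ) (f1 j' e c') *
              (((Real.sqrt (lam j) : ℝ) : ℂ) * ((Real.sqrt (lam j') : ℝ) : ℂ))) *
              ∑ a, v j (a,b) * (starRingEnd ℂ) (v j' (a,b')) from by ring]
        rw [key3 j j' e c c', Finset.mul_sum]
      calc ptraceL (proj ψ) (b,c) (b',c')
          = ∑ a, ∑ a2, ψ ((a,a2),(b,c)) * (starRingEnd ℂ) (ψ ((a,a2),(b',c'))) := by
            simp only [ptraceL, proj, Matrix.of_apply, Fintype.sum_prod_type]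
        _ = ∑ a, ∑ a2, ∑ j, ∑ j', (v j (a,b) * w j a2 c) *
              ((starRingEnd ℂ) (v j' (a,b')) * (starRingEnd ℂ) (w j' a2 c')) := by
            apply Finset.sum_congr rfl; intro a _
            apply Finset.sum_congr rfl; intro a2 _
            rw [hexp a a2 b c, hexp a a2 b' c', map_sum, Finset.sum_mul_sum]
            exact Finset.sum_congr rfl fun j _ => Finset.sum_congr rfl fun j' _ => by
              rw [_root_.map_mul]
        _ = ∑ j, ∑ j', ∑ a, ∑ a2, (v j (a,b) * w j a2 c) *
              ((starRingEnd ℂ) (v j' (a,b')) * (starRingEnd ℂ) (w j' a2 c')) := sum4 _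
        _ = ∑ e, ∑ j, ∑ j', ∑ a, (w j e c * (starRingEnd ℂ) (w j' e c')) *
              (v j (a,b) * (starRingEnd ℂ) (v j' (a,b'))) := by
            rw [sum_rot4 (fun e j j' a => (w j e c * (starRingEnd ℂ) (w j' e c')) *
              (v j (a,b) * (starRingEnd ℂ) (v j' (a,b'))))]
            apply Finset.sum_congr rfl; intro j _
            apply Finset.sum_congr rfl; intro j' _
            apply Finset.sum_congr rfl; intro a _
            exact Finset.sum_congr rfl fun a2 _ => by ring
        _ = (∑ e, (((1 : Matrix (Fin dB) (Fin dB) ℂ) ⊗ₖ V (Fin.castAdd (dA*dB) e)) * μM *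
              ((1 : Matrix (Fin dB) (Fin dB) ℂ) ⊗ₖ V (Fin.castAdd (dA*dB) e))ᴴ) (b,c) (b',c'))
            + ∑ j0, (((1 : Matrix (Fin dB) (Fin dB) ℂ) ⊗ₖ V (Fin.natAdd dA' j0)) * μM *
              ((1 : Matrix (Fin dB) (Fin dB) ℂ) ⊗ₖ V (Fin.natAdd dA' j0))ᴴ) (b,c) (b',c') := by
            rw [Finset.sum_congr rfl (fun j0 _ => hb2 j0), Finset.sum_const_zero, add_zero]
            exact Finset.sum_congr rfl fun e _ => (hb1 e).symm
    rw [ent, hmat]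

set_option maxHeartbeats 2000000 in
/-- channel reformulation of the entanglement of purification. With the
standard purification ψ_s = Σᵢ √λᵢ |ψᵢ⟩_{AB}|0⟩_{A'}|i⟩_{B'} of ρ = Σᵢ λᵢ|ψᵢ⟩⟨ψᵢ| and
μ_{BB'}(ρ) = Tr_{AA'}|ψ_s⟩⟨ψ_s|, one has
E_p(ρ) = inf over TCP maps Λ_{B'} of S((I_B ⊗ Λ_{B'})(μ_{BB'}(ρ))). -/
theorem stmt3 {dA dB : ℕ}
    (ρ : Matrix (Fin dA × Fin dB) (Fin dA × Fin dB) ℂ) (hρ : IsDensity ρ)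
    (lam : Fin (dA * dB) → ℝ) (v : Fin (dA * dB) → Fin dA × Fin dB → ℂ)
    (hlam : ∀ i, 0 ≤ lam i)
    (hon : ∀ i j, ∑ x, (starRingEnd ℂ) (v i x) * v j x = if i = j then 1 else 0)
    (hdecomp : ρ = ∑ i, (lam i : ℂ) • proj (v i)) :
    Ep ρ = sInf { e : ℝ |
      ∃ (d2 m : ℕ) (V : Fin m → Matrix (Fin d2) (Fin (dA * dB)) ℂ),
        (∑ i, (V i)ᴴ * V i = 1) ∧
        e = vN (∑ i, ((1 : Matrix (Fin dB) (Fin dB) ℂ) ⊗ₖ V i) *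
              ptraceL (proj (fun x : (Fin dA × Fin 1) × (Fin dB × Fin (dA * dB)) =>
                ((Real.sqrt (lam x.2.2) : ℝ) : ℂ) * v x.2.2 (x.1.1, x.2.1))) *
              ((1 : Matrix (Fin dB) (Fin dB) ℂ) ⊗ₖ V i)ᴴ) } := by
  have honC := complete v hon
  apply congrArg sInf
  ext E
  constructor
  · rintro ⟨dA', dB', ψ, ⟨hnorm, hpur⟩, rfl⟩
    obtain ⟨d2, m, V, hV, he⟩ := dir2 ρ lam v hlam hon hdecomp ψ hnorm hpur
    exact ⟨d2, m, V, hV, he⟩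
  · rintro ⟨d2, m, V, hV, rfl⟩
    obtain ⟨ψ, hp, he⟩ := dir1 ρ hρ.2 lam v hlam hon hdecomp V hV
    exact ⟨m, d2, ψ, hp, he⟩

end QIT
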